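/- Let E = [[Ẽ, 0],[0, 0]] be a (0,1,−1) matrix with zero row and column sums. Then E is realizable (i.e., there exists a (0,1) matrix A such that A and A+E are Gram mates) if and only if Ẽ is realizable. -/

import Mathlib

open Matrix

/-- A (0,1,−1) matrix `F` with zero row and column sums is realizable if there is a
(0,1) matrix `A` such that `A + F` is a (0,1) matrix and `A`, `A + F` are Gram mates. -/
def Realizable {m n : Type*} [Fintype m] [Fintype n] (F : Matrix m n ℝ) : Prop :=
  ∃ A : Matrix m n ℝ, (∀ i j, A i j = 0 ∨ A i j = 1) ∧
    (∀ i j, (A + F) i j = 0 ∨ (A + F) i j = 1) ∧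
    A * Aᵀ = (A + F) * (A + F)ᵀ ∧ Aᵀ * A = (A + F)ᵀ * (A + F) ∧ A ≠ A + F

lemma gram_left_iff {m n : Type*} [Fintype m] [Fintype n] (A F : Matrix m n ℝ) :
    A * Aᵀ = (A + F) * (A + F)ᵀ ↔ A * Fᵀ + F * Aᵀ + F * Fᵀ = 0 := by
  have h : (A + F) * (A + F)ᵀ = A * Aᵀ + (A * Fᵀ + F * Aᵀ + F * Fᵀ) := by
    rw [transpose_add, Matrix.add_mul, Matrix.mul_add, Matrix.mul_add]
    abel
  rw [h, left_eq_add]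

lemma gram_right_iff {m n : Type*} [Fintype m] [Fintype n] (A F : Matrix m n ℝ) :
    Aᵀ * A = (A + F)ᵀ * (A + F) ↔ Aᵀ * F + Fᵀ * A + Fᵀ * F = 0 := by
  have h : (A + F)ᵀ * (A + F) = Aᵀ * A + (Aᵀ * F + Fᵀ * A + Fᵀ * F) := by
    rw [transpose_add, Matrix.add_mul, Matrix.mul_add, Matrix.mul_add]
    abel
  rw [h, left_eq_add]

theorem stmt9 (m₁ m₂ n₁ n₂ : ℕ)
    (Et : Matrix (Fin m₁) (Fin n₁) ℝ)
    (hEt01 : ∀ i j, Et i j = 0 ∨ Et i j = 1 ∨ Et i j = -1)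
    (hEt0 : Et ≠ 0)
    (hrow : Et *ᵥ (fun _ => 1) = 0)
    (hcol : (fun _ => 1) ᵥ* Et = 0) :
    Realizable (Matrix.fromBlocks Et 0 0 0 :
      Matrix (Fin m₁ ⊕ Fin m₂) (Fin n₁ ⊕ Fin n₂) ℝ) ↔ Realizable Et := by
  set E : Matrix (Fin m₁ ⊕ Fin m₂) (Fin n₁ ⊕ Fin n₂) ℝ := Matrix.fromBlocks Et 0 0 0 with hE
  constructor
  · rintro ⟨A, hA01, hAE01, h1, h2, hne⟩
    set B := A.toBlocks₁₁ with hB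
    refine ⟨B, ?_, ?_, ?_, ?_, ?_⟩
    · intro i j; exact hA01 (Sum.inl i) (Sum.inl j)
    · intro i j
      have := hAE01 (Sum.inl i) (Sum.inl j)
      simpa [hE, hB, Matrix.fromBlocks, Matrix.toBlocks₁₁] using this
    · rw [gram_left_iff] at h1 ⊢
      have hAdec : A = Matrix.fromBlocks B A.toBlocks₁₂ A.toBlocks₂₁ A.toBlocks₂₂ :=
        (Matrix.fromBlocks_toBlocks A).symm
      rw [hAdec, hE] at h1
      have h1' := congrArg Matrix.toBlocks₁₁ h1
      simp [Matrix.fromBlocks_transpose, Matrix.fromBlocks_multiply,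
        Matrix.fromBlocks_add, Matrix.toBlocks_fromBlocks₁₁, Matrix.toBlocks₁₁] at h1'
      exact h1'
    · rw [gram_right_iff] at h2 ⊢
      have hAdec : A = Matrix.fromBlocks B A.toBlocks₁₂ A.toBlocks₂₁ A.toBlocks₂₂ :=
        (Matrix.fromBlocks_toBlocks A).symm
      rw [hAdec, hE] at h2
      have h2' := congrArg Matrix.toBlocks₁₁ h2
      simp [Matrix.fromBlocks_transpose, Matrix.fromBlocks_multiply,
        Matrix.fromBlocks_add, Matrix.toBlocks_fromBlocks₁₁, Matrix.toBlocks₁₁] at h2'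
      exact h2'
    · intro h
      exact hEt0 ((left_eq_add).mp h)
  · rintro ⟨B, hB01, hBE01, h1, h2, hne⟩
    refine ⟨Matrix.fromBlocks B 0 0 0, ?_, ?_, ?_, ?_, ?_⟩
    · rintro (i | i) (j | j) <;> simp [Matrix.fromBlocks, hB01 _ _]
    · rintro (i | i) (j | j)
      · simpa [hE, Matrix.fromBlocks] using hBE01 i j
      · simp [hE, Matrix.fromBlocks]
      · simp [hE, Matrix.fromBlocks]
      · simp [hE, Matrix.fromBlocks]
    · rw [gram_left_iff] at h1 ⊢
      rw [hE, Matrix.fromBlocks_transpose, Matrix.fromBlocks_transpose]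
      rw [Matrix.fromBlocks_multiply, Matrix.fromBlocks_multiply,
        Matrix.fromBlocks_multiply, Matrix.fromBlocks_add, Matrix.fromBlocks_add]
      simp only [Matrix.mul_zero, Matrix.zero_mul, add_zero, zero_add,
        Matrix.transpose_zero]
      rw [h1]
      simp
    · rw [gram_right_iff] at h2 ⊢
      rw [hE, Matrix.fromBlocks_transpose, Matrix.fromBlocks_transpose]
      rw [Matrix.fromBlocks_multiply, Matrix.fromBlocks_multiply,
        Matrix.fromBlocks_multiply, Matrix.fromBlocks_add, Matrix.fromBlocks_add]
      simp only [Matrix.mul_zero, Matrix.zero_mul, add_zero, zero_add,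
        Matrix.transpose_zero]
      rw [h2]
      simp
    · intro h
      have h0 : E = 0 := (left_eq_add).mp h
      apply hEt0
      have := congrArg Matrix.toBlocks₁₁ h0
      simp [hE, Matrix.toBlocks_fromBlocks₁₁, Matrix.toBlocks₁₁] at this
      exact this
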